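/- For every integer k ≥ 1, the formula with reversal φ_{3k} is 5-avoidable: there are infinitely many finite words over a 5-letter alphabet that avoid φ_{3k}. -/

import Mathlib

/-- A word `w` *encounters* the formula with reversal
`φ_k = x y₁ ⋯ y_k x · ȳ₁ · ⋯ · ȳ_k` if there are nonempty words `X, Y₁, …, Y_k`
such that `X Y₁ ⋯ Y_k X` is a factor of `w` and each reversed `Yᵢ` is a factor of `w`. -/
def Encounters {A : Type*} (k : ℕ) (w : List A) : Prop :=
  ∃ (X : List A) (Ys : List (List A)),
    Ys.length = k ∧ X ≠ [] ∧ (∀ Y ∈ Ys, Y ≠ []) ∧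
    (X ++ Ys.flatten ++ X) <:+: w ∧ (∀ Y ∈ Ys, Y.reverse <:+: w)

/-- A word avoids the formula with reversal `φ_k`. -/
def Avoids {A : Type*} (k : ℕ) (w : List A) : Prop := ¬ Encounters k w

/-- A word is square-free if it has no factor `u ++ u` with `u` nonempty. -/
def SquareFree {A : Type*} (w : List A) : Prop :=
  ∀ u : List A, u ≠ [] → ¬ (u ++ u) <:+: w

/-- Auxiliary function building the `m`-cyclic `w`-word starting at block index `i`. -/
def cyclicWordFrom {A : Type*} (m : ℕ) (a : ℕ → A) : ℕ → List ℕ → List A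
  | _, [] => []
  | i, x :: xs => List.replicate x (a (i % m)) ++ cyclicWordFrom m a (i + 1) xs

/-- The `m`-cyclic `w`-word `C_m(w)` on letters `a 0, …, a (m-1)`:
`(a 0)^{w₁} (a 1)^{w₂} ⋯ (a (m-1))^{w_m} (a 0)^{w_{m+1}} ⋯`. -/
def cyclicWord {A : Type*} (m : ℕ) (a : ℕ → A) (w : List ℕ) : List A :=
  cyclicWordFrom m a 0 w

/-- `w` (a word over `{1,…,k+1}`) contains a forbidden `(k,m)`-factor:
a factor `x' α₁ ⋯ α_j x''` with `1 ≤ j ≤ k`, each `αᵢ` a letter of `{1,…,k+1}`,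
`α₁+⋯+α_j ≥ k`, `|x'| = |x''| = n ≡ m - j (mod m)`, `x'₁ ≥ x''₁`, `x'ₙ ≤ x''ₙ`, and
`x'ᵢ = x''ᵢ` for `i ∈ {2,…,n-1}` (1-indexed). -/
def ForbiddenFactor (k m : ℕ) (w : List ℕ) : Prop :=
  ∃ x' α x'' : List ℕ,
    (x' ++ α ++ x'') <:+: w ∧
    1 ≤ α.length ∧ α.length ≤ k ∧
    (∀ c ∈ α, 1 ≤ c ∧ c ≤ k + 1) ∧
    k ≤ α.sum ∧
    x'.length = x''.length ∧
    x'.length % m = (m - α.length) % m ∧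
    x''.getD 0 0 ≤ x'.getD 0 0 ∧
    x'.getD (x'.length - 1) 0 ≤ x''.getD (x''.length - 1) 0 ∧
    ∀ i, 0 < i → i < x'.length - 1 → x'.getD i 0 = x''.getD i 0

/-- The 8-uniform morphism `f` with `f(0)=11112122`, `f(1)=12112222`, `f(2)=21111222`. -/
def fMorph (v : List ℕ) : List ℕ :=
  v.flatMap fun c =>
    if c = 0 then [1,1,1,1,2,1,2,2]
    else if c = 1 then [1,2,1,1,2,2,2,2]
    else [2,1,1,1,1,2,2,2]

/-- Image of a letter under the morphism `ρ` with `ρ(1)=22`, `ρ(2)=21`. -/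
def rhoLetter (c : ℕ) : List ℕ := if c = 1 then [2,2] else [2,1]

/-- The morphism `ρ : {1,2}* → {1,2}*` with `ρ(1)=22`, `ρ(2)=21`. -/
def rhoWord (v : List ℕ) : List ℕ := v.flatMap rhoLetter

/-- The morphism `d_k` with `d_k(i) = i^{k+1}` for `i ∈ {0,1,2}`. -/
def dMorph (k : ℕ) (w : List ℕ) : List ℕ := w.flatMap fun i => List.replicate (k + 1) i

/-- The morphism `g` with `g(i) = i·a·b`, where the letters `a, b` are coded `3, 4`. -/
def gMorph (w : List ℕ) : List ℕ := w.flatMap fun i => [i, 3, 4]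

/-- The morphism `g'` with `g'(i) = i·a·b·c·d`, where `a,b,c,d` are coded `3,4,5,6`. -/
def g'Morph (w : List ℕ) : List ℕ := w.flatMap fun i => [i, 3, 4, 5, 6]

/-- Insert the letter `c` after every `t` letters of `l`. -/
def insertEvery {A : Type*} (c : A) (t : ℕ) (l : List A) : List A :=
  if _h : l.length ≤ t ∨ t = 0 then l
  else l.take t ++ c :: insertEvery c t (l.drop t)
termination_by l.length
decreasing_by
  simp only [List.length_drop]
  omega

/-- `φ_k` is `n`-avoidable: infinitely many finite words over an `n`-letter alphabet avoid it. -/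
def IsNAvoidable (k n : ℕ) : Prop := {w : List (Fin n) | Avoids k w}.Infinite


namespace PhiAvoid


def tm (n : ℕ) : Bool :=
  if h : n = 0 then false
  else if n % 2 = 1 then !tm (n / 2) else tm (n / 2)
termination_by n
decreasing_by all_goals omega

lemma tm_zero : tm 0 = false := by rw [tm]; simp

lemma tm_two_mul (n : ℕ) : tm (2 * n) = tm n := by
  cases n with
  | zero => rfl
  | succ m =>
    rw [tm]
    have h1 : ¬ (2 * (m+1) = 0) := by omega
    have h2 : ¬ (2 * (m+1) % 2 = 1) := by omega
    have h3 : 2 * (m+1) / 2 = m + 1 := by omega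
    simp [h1, h2, h3]

lemma tm_two_mul_add_one (n : ℕ) : tm (2 * n + 1) = !tm n := by
  rw [tm]
  have h1 : ¬ (2 * n + 1 = 0) := by omega
  have h2 : (2 * n + 1) % 2 = 1 := by omega
  have h3 : (2 * n + 1) / 2 = n := by omega
  simp [h1, h2, h3]

lemma noAAA (n : ℕ) : ¬ (tm n = tm (n+1) ∧ tm (n+1) = tm (n+2)) := by
  rcases Nat.even_or_odd n with ⟨a, ha⟩ | ⟨a, ha⟩
  · subst ha
    rintro ⟨h1, -⟩
    have e1 : a + a = 2 * a := by omega
    have e2 : a + a + 1 = 2 * a + 1 := by omega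
    rw [e2, tm_two_mul_add_one] at h1
    rw [e1, tm_two_mul] at h1
    cases tm a <;> simp_all
  · subst ha
    rintro ⟨-, h2⟩
    have e1 : 2 * a + 1 + 1 = 2 * (a + 1) := by omega
    have e2 : 2 * a + 1 + 2 = 2 * (a + 1) + 1 := by omega
    rw [e1, tm_two_mul] at h2
    rw [e2, tm_two_mul_add_one] at h2
    cases tm (a+1) <;> simp_all



theorem overlapFree : ∀ ℓ, 1 ≤ ℓ → ∀ p, ¬ (∀ j, j ≤ ℓ → tm (p + j) = tm (p + ℓ + j)) := by
  intro ℓ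
  induction ℓ using Nat.strong_induction_on with
  | _ ℓ IH =>
    intro hℓ p H
    rcases Nat.even_or_odd ℓ with ⟨l', hl'⟩ | ⟨h, hh⟩
    · -- even case, ℓ = 2 l'
      have hl2 : ℓ = 2 * l' := by omega
      have hl'1 : 1 ≤ l' := by omega
      have H' : ∀ j, j ≤ l' → tm (p / 2 + j) = tm (p / 2 + l' + j) := by
        intro j hj
        set c := p / 2 + j with hc
        by_cases hy : p ≤ 2 * c
        · have hb : 2 * c - p ≤ ℓ := by omega
          have := H (2 * c - p) hb
          rw [show p + (2 * c - p) = 2 * c from by omega] at this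
          rw [show p + ℓ + (2 * c - p) = 2 * (c + l') from by omega] at this
          rw [tm_two_mul, tm_two_mul] at this
          rw [show p / 2 + l' + j = c + l' from by omega]
          exact this
        · have hb : 2 * c + 1 - p ≤ ℓ := by omega
          have := H (2 * c + 1 - p) hb
          rw [show p + (2 * c + 1 - p) = 2 * c + 1 from by omega] at this
          rw [show p + ℓ + (2 * c + 1 - p) = 2 * (c + l') + 1 from by omega] at this
          rw [tm_two_mul_add_one, tm_two_mul_add_one] at this
          rw [show p / 2 + l' + j = c + l' from by omega]
          simpa using this
      exact IH l' (by omega) hl'1 (p / 2) H'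
    · -- odd case, ℓ = 2h+1
      -- write ℓ = 2*hh - 1 with hh = h+1 ≥ 1
      by_cases h1 : ℓ = 1
      · subst h1
        have A := H 0 (by omega)
        have B := H 1 (by omega)
        rw [show p + 0 = p from by omega] at A
        rw [show p + 1 + 0 = p + 1 from by omega] at A
        rw [show p + 1 + 1 = p + 2 from by omega] at B
        exact noAAA p ⟨A, B⟩
      · -- ℓ = 2h+1 ≥ 3, set hh := h+1 so ℓ = 2*hh - 1, hh ≥ 2
        have hℓ3 : 3 ≤ ℓ := by omega
        have oddpair : ∀ α, p ≤ 2 * α + 1 → 2 * α + 2 ≤ p + ℓ → tm α = tm (α + 1) := by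
          intro α ha hb
          have h1' := H (2 * α + 1 - p) (by omega)
          have h2' := H (2 * α + 2 - p) (by omega)
          rw [show p + (2*α+1-p) = 2*α+1 from by omega] at h1'
          rw [show p + ℓ + (2*α+1-p) = 2*(α + (h+1)) from by omega] at h1'
          rw [show p + (2*α+2-p) = 2*(α+1) from by omega] at h2'
          rw [show p + ℓ + (2*α+2-p) = 2*(α + (h+1)) + 1 from by omega] at h2'
          rw [tm_two_mul_add_one, tm_two_mul] at h1'
          rw [tm_two_mul, tm_two_mul_add_one] at h2'
          cases hα : tm α <;> cases hβ : tm (α + (h+1)) <;> simp_all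
        have evenpair : ∀ A, p ≤ 2 * A → 2 * A + 1 ≤ p + ℓ → tm (A + h) = tm (A + h + 1) := by
          intro A ha hb
          have h1' := H (2 * A - p) (by omega)
          have h2' := H (2 * A + 1 - p) (by omega)
          rw [show p + (2*A-p) = 2*A from by omega] at h1'
          rw [show p + ℓ + (2*A-p) = 2*(A + h) + 1 from by omega] at h1'
          rw [show p + (2*A+1-p) = 2*A+1 from by omega] at h2'
          rw [show p + ℓ + (2*A+1-p) = 2*(A + h + 1) from by omega] at h2'
          rw [tm_two_mul, tm_two_mul_add_one] at h1'
          rw [tm_two_mul_add_one, tm_two_mul] at h2'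
          cases hα : tm A <;> simp_all
        rcases Nat.even_or_odd p with ⟨a, hp⟩ | ⟨a, hp⟩
        · -- p = 2a even
          have e1 : tm a = tm (a + 1) := oddpair a (by omega) (by omega)
          by_cases hh2 : h = 1
          · -- ℓ = 3 : evenpair at A = a gives aa at a+1
            have e2 : tm (a + 1) = tm (a + 1 + 1) := by
              have := evenpair a (by omega) (by omega)
              rw [hh2] at this
              simpa using this
            exact noAAA a ⟨e1, by simpa [show a+1+1 = a+2 from by omega] using e2⟩
          · -- h ≥ 2, ℓ ≥ 5: oddpair at a+1
            have e2 : tm (a + 1) = tm (a + 2) := by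
              have := oddpair (a+1) (by omega) (by omega)
              simpa [show a+1+1 = a+2 from by omega] using this
            exact noAAA a ⟨e1, e2⟩
        · -- p = 2a+1 odd
          have e1 : tm a = tm (a + 1) := oddpair a (by omega) (by omega)
          have e2 : tm (a + 1) = tm (a + 2) := by
            have := oddpair (a+1) (by omega) (by omega)
            simpa [show a+1+1 = a+2 from by omega] using this
          exact noAAA a ⟨e1, e2⟩



/-- ternary squarefree word: first difference coding of Thue-Morse -/
noncomputable def sw (n : ℕ) : ℕ :=
  if tm n = tm (n+1) then 0 else if tm n then 1 else 2

lemma sw_lt3 (n : ℕ) : sw n < 3 := by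
  unfold sw; split_ifs <;> omega

lemma sw_step_eq {n m : ℕ} (hs : sw n = sw m) (ht : tm n = tm m) :
    tm (n+1) = tm (m+1) := by
  unfold sw at hs
  cases h1 : tm n <;> cases h2 : tm (n+1) <;> cases h3 : tm m <;> cases h4 : tm (m+1) <;>
    simp_all

lemma sw_step_ne {n m : ℕ} (hs : sw n = sw m) (ht : tm n ≠ tm m) :
    tm n = tm (n+1) ∧ tm m = tm (m+1) := by
  unfold sw at hs
  cases h1 : tm n <;> cases h2 : tm (n+1) <;> cases h3 : tm m <;> cases h4 : tm (m+1) <;>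
    simp_all

theorem sqfree_sw : ∀ d ℓ, 1 ≤ ℓ → ¬ (∀ j, j < ℓ → sw (d + j) = sw (d + ℓ + j)) := by
  intro d ℓ hℓ H
  by_cases h0 : tm d = tm (d + ℓ)
  · -- all equal: overlap
    have key : ∀ j, j ≤ ℓ → tm (d + j) = tm (d + ℓ + j) := by
      intro j
      induction j with
      | zero => intro _; simpa using h0
      | succ i ih =>
        intro hi
        have h1 := ih (by omega)
        have h2 := sw_step_eq (H i (by omega)) h1
        rw [show d + i + 1 = d + (i+1) from by omega] at h2
        rw [show d + ℓ + i + 1 = d + ℓ + (i+1) from by omega] at h2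
        exact h2
    exact overlapFree ℓ hℓ d key
  · -- mismatch: tm constant
    have key : ∀ j, j < ℓ → tm (d + j) ≠ tm (d + ℓ + j) ∧
        tm (d + j) = tm (d + j + 1) ∧ tm (d + ℓ + j) = tm (d + ℓ + j + 1) := by
      intro j
      induction j with
      | zero =>
        intro hj
        have hne : tm (d + 0) ≠ tm (d + ℓ + 0) := by simpa using h0
        have := sw_step_ne (H 0 hj) hne
        exact ⟨hne, this.1, this.2⟩
      | succ i ih =>
        intro hi
        obtain ⟨hne, he1, he2⟩ := ih (by omega)
        have hne' : tm (d + (i+1)) ≠ tm (d + ℓ + (i+1)) := by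
          rw [show d + (i+1) = d + i + 1 from by omega,
              show d + ℓ + (i+1) = d + ℓ + i + 1 from by omega]
          rw [← he1, ← he2]; exact hne
        have := sw_step_ne (H (i+1) hi) hne'
        refine ⟨hne', ?_, ?_⟩
        · simpa [show d + (i+1) + 1 = d + (i+1) + 1 from rfl] using this.1
        · exact this.2
    by_cases hℓ1 : ℓ = 1
    · subst hℓ1
      obtain ⟨-, he1, he2⟩ := key 0 (by omega)
      apply noAAA d
      constructor
      · simpa using he1
      · have : tm (d + 1) = tm (d + 1 + 1) := by simpa using he2
        simpa [show d+1+1 = d+2 from by omega] using this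
    · obtain ⟨-, he1, -⟩ := key 0 (by omega)
      obtain ⟨-, he2, -⟩ := key 1 (by omega)
      apply noAAA d
      constructor
      · simpa using he1
      · simpa [show d+1+1 = d+2 from by omega] using he2



/-- helper: compute division -/
lemma div_eq_of (a B q r : ℕ) (hB : 0 < B) (h : a = B * q + r) (hr : r < B) :
    a / B = q ∧ a % B = r := by
  subst h
  constructor
  · rw [Nat.mul_add_div hB, Nat.div_eq_of_lt hr]
    omega
  · rw [Nat.mul_add_mod, Nat.mod_eq_of_lt hr]

/-- the blockified word -/
noncomputable def uu (k c : ℕ) : ℕ := sw (c / (k+1))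

theorem uu_gapfree (k : ℕ) (hk : 1 ≤ k) :
    ∀ c₀ m, 1 ≤ m → ¬ (∀ j, j < m → uu k (c₀ + j) = uu k (c₀ + j + (m + k))) := by
  intro c₀ m hm H
  set B := k + 1 with hBdef
  have hB0 : 0 < B := by omega
  by_cases hcase : m ≤ B
  · -- small m
    -- choose c with c₀ ≤ c < c₀ + m and c % B + m ≤ B
    have hr := Nat.mod_lt c₀ hB0
    have hd := Nat.div_add_mod c₀ B
    set r := c₀ % B with hrdef
    have hex : ∃ c, c₀ ≤ c ∧ c < c₀ + m ∧ c % B + m ≤ B := by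
      by_cases hsm : r + m ≤ B
      · exact ⟨c₀, le_refl _, by omega, by omega⟩
      · refine ⟨c₀ + (B - r), by omega, by omega, ?_⟩
        have h2 : c₀ + (B - r) = B * (c₀ / B + 1) + 0 := by
          rw [Nat.mul_add, Nat.mul_one]; omega
        have := (div_eq_of _ B _ _ hB0 h2 hB0).2
        omega
    obtain ⟨c, hc1, hc2, hc3⟩ := hex
    have hdc := Nat.div_add_mod c B
    have hkey : (c + (m + k)) / B = c / B + 1 := by
      have h2 : c + (m + k) = B * (c / B + 1) + (c % B + m - 1) := by
        rw [Nat.mul_add, Nat.mul_one]; omega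
      exact (div_eq_of _ B _ _ hB0 h2 (by omega)).1
    have hH := H (c - c₀) (by omega)
    rw [show c₀ + (c - c₀) = c from by omega] at hH
    unfold uu at hH
    rw [hkey] at hH
    exact sqfree_sw (c / B) 1 (by omega) (by intro j hj; interval_cases j; simpa using hH)
  · push_neg at hcase  -- B < m
    by_cases hdvd : (m + k) % B = 0
    · -- aligned case : square of length L in sw
      have hd := Nat.div_add_mod (m + k) B
      set L := (m + k) / B with hL
      have hmk : m + k = B * L := by omega
      have hL1 : 1 ≤ L := by
        rcases Nat.eq_zero_or_pos L with h | h
        · rw [h, Nat.mul_zero] at hmk; omega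
        · exact h
      obtain ⟨L', hL'⟩ : ∃ L', L = L' + 1 := ⟨L - 1, by omega⟩
      have hstep : B * L = B * L' + B := by rw [hL', Nat.mul_add, Nat.mul_one]
      have hm1 : m - 1 = B * L' := by omega
      apply sqfree_sw (c₀ / B) L hL1
      intro j hj
      have hjb : B * j ≤ m - 1 := by
        have : B * j ≤ B * L' := Nat.mul_le_mul_left _ (by omega)
        omega
      have hH := H (B * j) (by omega)
      rw [show c₀ + B * j + (m + k) = c₀ + B * (j + L) from by rw [hmk, Nat.mul_add]; omega] at hH
      unfold uu at hH
      rw [show c₀ + B * j = B * j + c₀ from by omega, Nat.mul_add_div hB0] at hH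
      rw [show c₀ + B * (j + L) = B * (j + L) + c₀ from by omega, Nat.mul_add_div hB0] at hH
      rw [show j + c₀ / B = c₀ / B + j from by omega] at hH
      rw [show j + L + c₀ / B = c₀ / B + L + j from by omega] at hH
      exact hH
    · -- non-aligned case
      set T := m + k with hT
      set o := (B - ((c₀ + T + 1) % B)) % B with ho
      set c := c₀ + o with hc
      have ho_lt : o < B := Nat.mod_lt _ hB0
      have hrho := Nat.mod_lt (c₀ + T + 1) hB0
      have hdd := Nat.div_add_mod (c₀ + T + 1) B
      have h1 : (c + T + 1) % B = 0 := by
        by_cases hz : (c₀ + T + 1) % B = 0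
        · have : o = 0 := by rw [ho, hz, Nat.sub_zero, Nat.mod_self]
          rw [hc, this]
          rw [show c₀ + 0 + T + 1 = c₀ + T + 1 from by omega]
          exact hz
        · have hoeq : o = B - (c₀ + T + 1) % B := by
            rw [ho]; exact Nat.mod_eq_of_lt (by omega)
          have h2 : c + T + 1 = B * ((c₀ + T + 1) / B + 1) + 0 := by
            rw [Nat.mul_add, Nat.mul_one]; omega
          exact (div_eq_of _ B _ _ hB0 h2 hB0).2
      have hdc := Nat.div_add_mod (c + T) B
      have h2 : (c + T) % B = B - 1 := by
        have hmod := Nat.mod_lt (c + T) hB0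
        by_contra hne
        have h3 : c + T + 1 = B * ((c + T) / B) + ((c + T) % B + 1) := by omega
        have := (div_eq_of _ B _ _ hB0 h3 (by omega)).2
        omega
      have h4 : (c + T + 1) / B = (c + T) / B + 1 := by
        have h3 : c + T + 1 = B * ((c + T) / B + 1) + 0 := by
          rw [Nat.mul_add, Nat.mul_one]; omega
        exact (div_eq_of _ B _ _ hB0 h3 hB0).1
      have hc1 : (c + 1) % B ≠ 0 := by
        intro hz
        have := Nat.add_mod (c + 1) T B
        rw [hz] at this
        rw [show c + 1 + T = c + T + 1 from by omega, h1] at this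
        simp at this
        exact hdvd this.symm
      have hdc2 := Nat.div_add_mod c B
      have hcm : c % B < B - 1 := by
        have hlt := Nat.mod_lt c hB0
        by_contra hge
        have hceq : c % B = B - 1 := by omega
        have h3 : c + 1 = B * (c / B + 1) + 0 := by rw [Nat.mul_add, Nat.mul_one]; omega
        have := (div_eq_of _ B _ _ hB0 h3 hB0).2
        omega
      have h5 : (c + 1) / B = c / B := by
        have h3 : c + 1 = B * (c / B) + (c % B + 1) := by omega
        exact (div_eq_of _ B _ _ hB0 h3 (by omega)).1
      have hA := H o (by omega)
      rw [show c₀ + o = c from rfl] at hA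
      have hB' := H (o + 1) (by omega)
      rw [show c₀ + (o + 1) = c + 1 from by omega] at hB'
      unfold uu at hA hB'
      rw [h5] at hB'
      rw [show c + 1 + T = c + T + 1 from by omega, h4] at hB'
      rw [show k + 1 = B from rfl] at hA
      refine sqfree_sw ((c + T) / B) 1 (by omega) ?_
      intro j hj
      interval_cases j
      simp only [Nat.add_zero]
      rw [← hA]
      exact hB'


lemma uu_lt3 (k c : ℕ) : uu k c < 3 := sw_lt3 _

/-- the 5-letter word, as an infinite sequence -/
noncomputable def W (k i : ℕ) : Fin 5 :=
  if i % 3 = 1 then 3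
  else if i % 3 = 2 then 4
  else ⟨uu k (i / 3), by have := uu_lt3 k (i / 3); omega⟩

def resOf (x : Fin 5) : ℕ := if x.val = 3 then 1 else if x.val = 4 then 2 else 0

lemma W_base {k x : ℕ} (hx : x % 3 = 0) :
    W k x = ⟨uu k (x / 3), by have := uu_lt3 k (x / 3); omega⟩ := by
  unfold W
  rw [hx]; norm_num

lemma W_one {k i : ℕ} (h : i % 3 = 1) : W k i = 3 := by
  unfold W; rw [h]; norm_num

lemma W_two {k i : ℕ} (h : i % 3 = 2) : W k i = 4 := by
  unfold W; rw [h]; norm_num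

lemma resW (k i : ℕ) : resOf (W k i) = i % 3 := by
  rcases (by omega : i % 3 = 0 ∨ i % 3 = 1 ∨ i % 3 = 2) with hr | hr | hr
  · rw [hr, W_base hr]
    have := uu_lt3 k (i / 3)
    unfold resOf
    rw [if_neg (by simp; omega), if_neg (by simp; omega)]
  · rw [hr, W_one hr]; rfl
  · rw [hr, W_two hr]; rfl

lemma Fact1 {k : ℕ} {i j : ℕ} (h1 : W k i = W k (j+1)) (h2 : W k (i+1) = W k j) :
    False := by
  have e1 := congrArg resOf h1
  have e2 := congrArg resOf h2
  rw [resW, resW] at e1 e2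
  omega

lemma Fact2 {k : ℕ} (hk : 1 ≤ k) (p M : ℕ) (hM : 1 ≤ M) :
    ¬ (∀ j, j < M → W k (p + j) = W k (p + M + 3 * k + j)) := by
  intro H
  -- residues
  have h0 := congrArg resOf (H 0 hM)
  rw [resW, resW] at h0
  have h3M : M % 3 = 0 := by omega
  obtain ⟨m, hm⟩ : ∃ m, M = 3 * m := ⟨M / 3, by omega⟩
  have hm1 : 1 ≤ m := by omega
  apply uu_gapfree k hk ((p + 2) / 3) m hm1
  intro j hj
  set c := (p + 2) / 3 + j with hc
  have hx : 3 * c % 3 = 0 := by omega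
  have hx2 : (3 * c + 3 * (m + k)) % 3 = 0 := by omega
  have hrange : 3 * c - p < M := by omega
  have hge : p ≤ 3 * c := by omega
  have hH := H (3 * c - p) (by omega)
  rw [show p + (3 * c - p) = 3 * c from by omega] at hH
  rw [show p + M + 3 * k + (3 * c - p) = 3 * c + 3 * (m + k) from by omega] at hH
  rw [W_base hx, W_base hx2] at hH
  have := Fin.mk.injEq _ _ _ _ ▸ hH
  have hval : uu k (3 * c / 3) = uu k ((3 * c + 3 * (m + k)) / 3) := by
    exact congrArg Fin.val hH
  rw [show 3 * c / 3 = c from by omega] at hval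
  rw [show (3 * c + 3 * (m + k)) / 3 = c + (m + k) from by omega] at hval
  rw [show (p + 2) / 3 + j + (m + k) = c + (m + k) from by omega]
  exact hval

/-- words: prefixes of W -/
noncomputable def WL (k N : ℕ) : List (Fin 5) := (List.range N).map (W k)

lemma WL_length (k N : ℕ) : (WL k N).length = N := by simp [WL]

lemma WL_get (k N i : ℕ) (h : i < N) :
    (WL k N)[i]'(by rw [WL_length]; exact h) = W k i := by
  simp [WL]

/-- positions of an infix -/
lemma infix_getElem {l w : List (Fin 5)} (h : l <:+: w) :
    ∃ off, off + l.length ≤ w.length ∧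
      ∀ j (hj : j < l.length) (hw : off + j < w.length), l[j] = w[off + j] := by
  obtain ⟨s, t, rfl⟩ := h
  refine ⟨s.length, by simp, ?_⟩
  intro j hj hw
  have e1 : (s ++ l ++ t)[s.length + j]'hw
      = (s ++ l)[s.length + j]'(by simp; omega) :=
    List.getElem_append_left (by simp; omega)
  have e2 : (s ++ l)[s.length + j]'(by simp; omega)
      = l[s.length + j - s.length]'(by simp [Nat.add_sub_cancel_left]; omega) :=
    List.getElem_append_right (by omega)
  simp only [Nat.add_sub_cancel_left] at e2
  rw [e1, e2]

lemma infix_W {k N : ℕ} {l : List (Fin 5)} (h : l <:+: WL k N) :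
    ∃ off, ∀ j (hj : j < l.length), l[j] = W k (off + j) := by
  obtain ⟨off, hoff, hget⟩ := infix_getElem h
  rw [WL_length] at hoff
  refine ⟨off, fun j hj => ?_⟩
  rw [hget j hj (by rw [WL_length]; omega), WL_get k N _ (by omega)]

lemma infix_flatten_of_mem {α : Type*} {Ys : List (List α)} {Y : List α} (h : Y ∈ Ys) :
    Y <:+: Ys.flatten := by
  induction Ys with
  | nil => simp at h
  | cons Z Zs ih =>
    rw [List.flatten_cons]
    rcases List.mem_cons.mp h with rfl | h'
    · exact (List.prefix_append Y Zs.flatten).isInfix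
    · exact (ih h').trans (List.suffix_append Z Zs.flatten).isInfix
  

lemma flatten_len_ones {α : Type*} {Ys : List (List α)} (h : ∀ Y ∈ Ys, Y.length = 1) :
    Ys.flatten.length = Ys.length := by
  induction Ys with
  | nil => simp
  | cons Z Zs ih =>
    rw [List.flatten_cons, List.length_append, h Z (by simp),
      ih (fun Y hY => h Y (by simp [hY])), List.length_cons]
    omega

theorem WL_avoids (k N : ℕ) (hk : 1 ≤ k) : Avoids (3 * k) (WL k N) := by
  rintro ⟨X, Ys, hlen, hX, hYne, hinf, hrev⟩
  by_cases hY2 : ∃ Y ∈ Ys, 2 ≤ Y.length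
  · obtain ⟨Y, hYmem, hYlen⟩ := hY2
    have hYw : Y <:+: WL k N :=
      (((infix_flatten_of_mem hYmem).trans
        (List.suffix_append X Ys.flatten).isInfix).trans
        (List.prefix_append (X ++ Ys.flatten) X).isInfix).trans hinf
    obtain ⟨i, hi⟩ := infix_W hYw
    obtain ⟨q, hq⟩ := infix_W (hrev Y hYmem)
    have hY0 : Y[0]'(by omega) = W k (i + 0) := hi 0 (by omega)
    have hY1 : Y[1]'(by omega) = W k (i + 1) := hi 1 (by omega)
    have A0 : W k (q + (Y.length - 1)) = W k (i + 0) := by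
      calc W k (q + (Y.length - 1))
          = Y.reverse[Y.length - 1]'(by rw [List.length_reverse]; omega) :=
            (hq (Y.length - 1) (by rw [List.length_reverse]; omega)).symm
        _ = Y[Y.length - 1 - (Y.length - 1)]'(by omega) := List.getElem_reverse _
        _ = Y[0]'(by omega) := getElem_congr rfl (by omega) _
        _ = W k (i + 0) := hY0
    have A1 : W k (q + (Y.length - 2)) = W k (i + 1) := by
      calc W k (q + (Y.length - 2))
          = Y.reverse[Y.length - 2]'(by rw [List.length_reverse]; omega) :=
            (hq (Y.length - 2) (by rw [List.length_reverse]; omega)).symm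
        _ = Y[Y.length - 1 - (Y.length - 2)]'(by omega) := List.getElem_reverse _
        _ = Y[1]'(by omega) := getElem_congr rfl (by omega) _
        _ = W k (i + 1) := hY1
    have h1 : W k i = W k ((q + (Y.length - 2)) + 1) := by
      rw [show (q + (Y.length - 2)) + 1 = q + (Y.length - 1) from by omega]
      rw [show i = i + 0 from by omega]
      exact A0.symm
    exact Fact1 h1 A1.symm
  · push_neg at hY2
    have hall : ∀ Y ∈ Ys, Y.length = 1 := by
      intro Y hY
      have h1 := hY2 Y hY
      have h2 : Y.length ≠ 0 := by
        simpa [List.length_eq_zero_iff] using hYne Y hY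
      omega
    have hF : Ys.flatten.length = 3 * k := by rw [flatten_len_ones hall, hlen]
    obtain ⟨off, hoff⟩ := infix_W hinf
    have hXpos : 0 < X.length := List.length_pos_iff.mpr hX
    apply Fact2 hk off X.length (by omega)
    intro j hj
    have hXFl : (X ++ Ys.flatten).length = X.length + 3 * k := by
      rw [List.length_append, hF]
    have btot : ((X ++ Ys.flatten) ++ X).length = X.length + 3 * k + X.length := by
      rw [List.length_append, hXFl]
    have e1 : W k (off + j) = X[j]'hj := by
      calc W k (off + j)
          = ((X ++ Ys.flatten) ++ X)[j]'(by rw [btot]; omega) :=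
            (hoff j (by rw [btot]; omega)).symm
        _ = (X ++ Ys.flatten)[j]'(by rw [hXFl]; omega) :=
            List.getElem_append_left (by rw [hXFl]; omega)
        _ = X[j]'hj := List.getElem_append_left hj
    have e2 : W k (off + (X.length + 3 * k + j)) = X[j]'hj := by
      calc W k (off + (X.length + 3 * k + j))
          = ((X ++ Ys.flatten) ++ X)[X.length + 3 * k + j]'(by rw [btot]; omega) :=
            (hoff _ (by rw [btot]; omega)).symm
        _ = X[X.length + 3 * k + j - (X ++ Ys.flatten).length]'(by rw [hXFl]; omega) :=
            List.getElem_append_right (by rw [hXFl]; omega)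
        _ = X[j]'hj := getElem_congr rfl (by rw [hXFl]; omega) _
    rw [show off + X.length + 3 * k + j = off + (X.length + 3 * k + j) from by omega]
    exact e1.trans e2.symm

theorem final (k : ℕ) (hk : 1 ≤ k) : {w : List (Fin 5) | Avoids (3 * k) w}.Infinite := by
  refine Set.infinite_of_injective_forall_mem (f := fun N => WL k N) ?_ ?_
  · intro a b hab
    have := congrArg List.length hab
    rwa [WL_length, WL_length] at this
  · intro N
    exact WL_avoids k N hk


end PhiAvoid

/-- For every `k ≥ 1`, `φ_{3k}` is 5-avoidable: infinitely many finite
words over a 5-letter alphabet avoid `φ_{3k}`. -/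
theorem phi_threeK_five_avoidable (k : ℕ) (hk : 1 ≤ k) :
    {w : List (Fin 5) | Avoids (3 * k) w}.Infinite := PhiAvoid.final k hk
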